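/- Let X₁, X₂ be independent random vectors in ℝ^d and let X₁′ = ‖X₁‖U₁ and X₂′ = ‖X₂‖U₂ be their spherically symmetric variants, with U₁, U₂ i.i.d. uniform on S^{d-1} independent of X₁, X₂. Then the inner product ⟨X₁, X₂′⟩ has the same distribution as ⟨X₁′, X₂′⟩. -/

import Mathlib

open MeasureTheory ProbabilityTheory Filter
open scoped RealInnerProductSpace ENNReal NNReal Topology ProbabilityTheory

noncomputable section

/-- A distribution on `ℝ^d` is spherically symmetric if it is invariant under every
orthogonal transformation (equivalently, every linear isometry equivalence of `ℝ^d`). -/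
def SphericallySymmetric {d : ℕ} (μ : Measure (EuclideanSpace ℝ (Fin d))) : Prop :=
  ∀ H : EuclideanSpace ℝ (Fin d) ≃ₗᵢ[ℝ] EuclideanSpace ℝ (Fin d), μ.map H = μ

/-- `μ` is the uniform distribution on the unit sphere `S^{d-1}`: a rotation-invariant
probability measure concentrated on the unit sphere. -/
def UnifSphere {d : ℕ} (μ : Measure (EuclideanSpace ℝ (Fin d))) : Prop :=
  IsProbabilityMeasure μ ∧ (∀ᵐ x ∂μ, ‖x‖ = 1) ∧ SphericallySymmetric μ

section Aux

variable {d : ℕ}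

local notation "E" => EuclideanSpace ℝ (Fin d)

lemma exists_unit {ν : Measure E} (hν : UnifSphere ν) : ∃ e : E, ‖e‖ = 1 := by
  obtain ⟨hprob, hae, -⟩ := hν
  have h1 : ν {x : E | ¬ ‖x‖ = 1} = 0 := by simpa [ae_iff] using hae
  have hne : ν {x : E | ‖x‖ = 1} ≠ 0 := by
    intro h0
    have hle : ν Set.univ ≤ ν {x : E | ¬ ‖x‖ = 1} + ν {x : E | ‖x‖ = 1} := by
      refine (measure_mono ?_).trans (measure_union_le _ _)
      intro x _
      by_cases hx : ‖x‖ = 1 <;> simp [hx]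
    rw [h1, h0, measure_univ] at hle
    simp at hle
  exact MeasureTheory.nonempty_of_measure_ne_zero hne

lemma core {ν : Measure E} (hν : UnifSphere ν)
    {e : E} (he : ‖e‖ = 1) (a : E) {t : Set ℝ} (ht : MeasurableSet t) :
    ν {u | ⟪a, u⟫ ∈ t} = ν {u | ‖a‖ * ⟪e, u⟫ ∈ t} := by
  by_cases ha : a = 0
  · simp [ha]
  · set b : E := ‖a‖⁻¹ • a with hb
    have hnb : ‖b‖ = 1 := by
      rw [hb, norm_smul, norm_inv, norm_norm, inv_mul_cancel₀ (norm_ne_zero_iff.2 ha)]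
    set K := (ℝ ∙ (e - b))ᗮ with hK
    have hHe : Submodule.reflection K e = b := Submodule.reflection_sub (by rw [he, hnb])
    have hHb : Submodule.reflection K b = e := by
      have h2 := Submodule.reflection_reflection K e
      rw [hHe] at h2
      exact h2
    have hinner : ∀ u : E, ⟪e, Submodule.reflection K u⟫ = ⟪b, u⟫ := by
      intro u
      have h3 := (Submodule.reflection K).inner_map_map b u
      rw [hHb] at h3
      exact h3
    have hmap := hν.2.2 (Submodule.reflection K)
    have hmeasH : Measurable (Submodule.reflection K : E → E) :=
      (Submodule.reflection K).continuous.measurable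
    have hsm : MeasurableSet {u : E | ‖a‖ * ⟪e, u⟫ ∈ t} := by
      have hm : Measurable fun u : E => ‖a‖ * ⟪e, u⟫ :=
        measurable_const.mul (Measurable.inner measurable_const measurable_id)
      exact hm ht
    have hab : ‖a‖ • b = a := by
      rw [hb, smul_smul, mul_inv_cancel₀ (norm_ne_zero_iff.2 ha), one_smul]
    calc ν {u | ⟪a, u⟫ ∈ t}
        = ν ((Submodule.reflection K : E → E) ⁻¹' {u : E | ‖a‖ * ⟪e, u⟫ ∈ t}) := by
          congr 1
          ext u
          simp only [Set.mem_preimage, Set.mem_setOf_eq, hinner u]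
          rw [← real_inner_smul_left, hab]
      _ = (ν.map (Submodule.reflection K)) {u : E | ‖a‖ * ⟪e, u⟫ ∈ t} :=
          (Measure.map_apply hmeasH hsm).symm
      _ = ν {u : E | ‖a‖ * ⟪e, u⟫ ∈ t} := by rw [hmap]

lemma key {μ : Measure (E × E)} [IsProbabilityMeasure μ]
    {ν : Measure E} (hν : UnifSphere ν) :
    Measure.map (fun p : (E × E) × E => ⟪p.1.1, ‖p.1.2‖ • p.2⟫) (μ.prod ν)
      = Measure.map (fun p : (E × E) × E × E => ⟪‖p.1.1‖ • p.2.1, ‖p.1.2‖ • p.2.2⟫)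
          (μ.prod (ν.prod ν)) := by
  have hP : IsProbabilityMeasure ν := hν.1
  obtain ⟨e, he⟩ := exists_unit hν
  have hf₁ : Measurable fun p : (E × E) × E => ⟪p.1.1, ‖p.1.2‖ • p.2⟫ :=
    Measurable.inner (measurable_fst.fst) ((measurable_fst.snd.norm).smul measurable_snd)
  have hf₂ : Measurable fun p : (E × E) × E × E => ⟪‖p.1.1‖ • p.2.1, ‖p.1.2‖ • p.2.2⟫ :=
    Measurable.inner ((measurable_fst.fst.norm).smul measurable_snd.fst)
      ((measurable_fst.snd.norm).smul measurable_snd.snd)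
  ext s hs
  rw [Measure.map_apply hf₁ hs, Measure.map_apply hf₂ hs,
      Measure.prod_apply (hf₁ hs), Measure.prod_apply (hf₂ hs)]
  refine lintegral_congr fun y => ?_
  have hq : MeasurableSet {q : E × E | ⟪‖y.1‖ • q.1, ‖y.2‖ • q.2⟫ ∈ s} := by
    have hm : Measurable fun q : E × E => ⟪‖y.1‖ • q.1, ‖y.2‖ • q.2⟫ :=
      Measurable.inner (by fun_prop)
        (by fun_prop)
    exact hm hs
  have hL : Prod.mk y ⁻¹' ((fun p : (E × E) × E => ⟪p.1.1, ‖p.1.2‖ • p.2⟫) ⁻¹' s)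
      = {u : E | ⟪‖y.2‖ • y.1, u⟫ ∈ s} := by
    ext u
    simp only [Set.mem_preimage, Set.mem_setOf_eq, real_inner_smul_left, real_inner_smul_right]
  have hR : Prod.mk y ⁻¹'
        ((fun p : (E × E) × E × E => ⟪‖p.1.1‖ • p.2.1, ‖p.1.2‖ • p.2.2⟫) ⁻¹' s)
      = {q : E × E | ⟪‖y.1‖ • q.1, ‖y.2‖ • q.2⟫ ∈ s} := rfl
  rw [hL, hR, Measure.prod_apply hq]
  rw [core hν he (‖y.2‖ • y.1) hs]
  have hnorm1 : {u : E | ‖‖y.2‖ • y.1‖ * ⟪e, u⟫ ∈ s}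
      = {u : E | ‖y.1‖ * ‖y.2‖ * ⟪e, u⟫ ∈ s} := by
    ext u
    rw [norm_smul, norm_norm, mul_comm ‖y.2‖ ‖y.1‖]
  rw [hnorm1]
  have hae : ∀ᵐ u1 ∂ν,
      ν (Prod.mk u1 ⁻¹' {q : E × E | ⟪‖y.1‖ • q.1, ‖y.2‖ • q.2⟫ ∈ s})
        = ν {u : E | ‖y.1‖ * ‖y.2‖ * ⟪e, u⟫ ∈ s} := by
    filter_upwards [hν.2.1] with u1 hu1
    have hset : Prod.mk u1 ⁻¹' {q : E × E | ⟪‖y.1‖ • q.1, ‖y.2‖ • q.2⟫ ∈ s}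
        = {u2 : E | ⟪(‖y.1‖ * ‖y.2‖) • u1, u2⟫ ∈ s} := by
      ext u2
      simp only [Set.mem_preimage, Set.mem_setOf_eq, real_inner_smul_left,
        real_inner_smul_right, mul_assoc]
      rw [mul_left_comm]
    rw [hset, core hν he ((‖y.1‖ * ‖y.2‖) • u1) hs]
    congr 1
    ext u2
    rw [norm_smul, hu1, mul_one, Real.norm_of_nonneg (by positivity)]
  rw [lintegral_congr_ae hae, lintegral_const, measure_univ, mul_one]

end Aux

/-- Lemma B.1: `⟨X₁, X₂'⟩ =ᵈ ⟨X₁', X₂'⟩` for independent `X₁, X₂` and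
their spherically symmetric variants. -/
theorem inner_variant_identDistrib
    {Ω : Type*} [MeasureSpace Ω] [IsProbabilityMeasure (ℙ : Measure Ω)]
    {d : ℕ}
    (X1 X2 U1 U2 : Ω → EuclideanSpace ℝ (Fin d))
    (hX1 : Measurable X1) (hX2 : Measurable X2)
    (hU1 : Measurable U1) (hU2 : Measurable U2)
    (hindep : iIndepFun
      ![X1, X2, U1, U2] ℙ)
    (hU1dist : UnifSphere (Measure.map U1 ℙ))
    (hU2dist : UnifSphere (Measure.map U2 ℙ))
    (hUiid : IdentDistrib U1 U2 ℙ ℙ) :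
    IdentDistrib (fun ω => ⟪X1 ω, ‖X2 ω‖ • U2 ω⟫)
      (fun ω => ⟪‖X1 ω‖ • U1 ω, ‖X2 ω‖ • U2 ω⟫) ℙ ℙ := by
  have hmeasv : ∀ i : Fin 4, Measurable (![X1, X2, U1, U2] i) := fun i => by
    fin_cases i
    · exact hX1
    · exact hX2
    · exact hU1
    · exact hU2
  have hY : Measurable fun ω => (X1 ω, X2 ω) := hX1.prodMk hX2
  have hV : Measurable fun ω => (U1 ω, U2 ω) := hU1.prodMk hU2
  have hYU2 : IndepFun (fun ω => (X1 ω, X2 ω)) U2 ℙ :=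
    hindep.indepFun_prodMk hmeasv 0 1 3 (by decide) (by decide)
  have hYV : IndepFun (fun ω => (X1 ω, X2 ω)) (fun ω => (U1 ω, U2 ω)) ℙ :=
    hindep.indepFun_prodMk_prodMk hmeasv 0 1 2 3
      (by decide) (by decide) (by decide) (by decide)
  have hU12 : IndepFun U1 U2 ℙ := hindep.indepFun (show (2 : Fin 4) ≠ 3 by decide)
  have hμP : IsProbabilityMeasure (Measure.map (fun ω => (X1 ω, X2 ω)) ℙ) :=
    Measure.isProbabilityMeasure_map hY.aemeasurable
  have hνP : IsProbabilityMeasure (Measure.map U2 ℙ) := hU2dist.1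
  have hmap1 : Measure.map (fun ω => ((X1 ω, X2 ω), U2 ω)) ℙ
      = (Measure.map (fun ω => (X1 ω, X2 ω)) ℙ).prod (Measure.map U2 ℙ) :=
    (indepFun_iff_map_prod_eq_prod_map_map hY.aemeasurable hU2.aemeasurable).1 hYU2
  have hmapV : Measure.map (fun ω => (U1 ω, U2 ω)) ℙ
      = (Measure.map U2 ℙ).prod (Measure.map U2 ℙ) := by
    rw [(indepFun_iff_map_prod_eq_prod_map_map hU1.aemeasurable hU2.aemeasurable).1 hU12,
      hUiid.map_eq]
  have hmap2 : Measure.map (fun ω => ((X1 ω, X2 ω), (U1 ω, U2 ω))) ℙ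
      = (Measure.map (fun ω => (X1 ω, X2 ω)) ℙ).prod
          ((Measure.map U2 ℙ).prod (Measure.map U2 ℙ)) := by
    rw [(indepFun_iff_map_prod_eq_prod_map_map hY.aemeasurable hV.aemeasurable).1 hYV, hmapV]
  have hf₁ : Measurable fun p : (EuclideanSpace ℝ (Fin d) × EuclideanSpace ℝ (Fin d)) ×
      EuclideanSpace ℝ (Fin d) => ⟪p.1.1, ‖p.1.2‖ • p.2⟫ :=
    Measurable.inner (measurable_fst.fst) ((measurable_fst.snd.norm).smul measurable_snd)
  have hf₂ : Measurable fun p : (EuclideanSpace ℝ (Fin d) × EuclideanSpace ℝ (Fin d)) ×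
      EuclideanSpace ℝ (Fin d) × EuclideanSpace ℝ (Fin d) =>
        ⟪‖p.1.1‖ • p.2.1, ‖p.1.2‖ • p.2.2⟫ :=
    Measurable.inner ((measurable_fst.fst.norm).smul measurable_snd.fst)
      ((measurable_fst.snd.norm).smul measurable_snd.snd)
  refine ⟨(hf₁.comp (hY.prodMk hU2)).aemeasurable,
    (hf₂.comp (hY.prodMk hV)).aemeasurable, ?_⟩
  have e1 : (fun ω => ⟪X1 ω, ‖X2 ω‖ • U2 ω⟫)
      = (fun p : (EuclideanSpace ℝ (Fin d) × EuclideanSpace ℝ (Fin d)) ×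
          EuclideanSpace ℝ (Fin d) => ⟪p.1.1, ‖p.1.2‖ • p.2⟫)
        ∘ (fun ω => ((X1 ω, X2 ω), U2 ω)) := rfl
  have e2 : (fun ω => ⟪‖X1 ω‖ • U1 ω, ‖X2 ω‖ • U2 ω⟫)
      = (fun p : (EuclideanSpace ℝ (Fin d) × EuclideanSpace ℝ (Fin d)) ×
          EuclideanSpace ℝ (Fin d) × EuclideanSpace ℝ (Fin d) =>
            ⟪‖p.1.1‖ • p.2.1, ‖p.1.2‖ • p.2.2⟫)
        ∘ (fun ω => ((X1 ω, X2 ω), (U1 ω, U2 ω))) := rfl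
  rw [e1, e2, ← Measure.map_map hf₁ (hY.prodMk hU2), ← Measure.map_map hf₂ (hY.prodMk hV),
    hmap1, hmap2]
  exact key hU2dist
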